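/- With M and P as in the previous setting (M = A_{n−1}⋯A₀, P = I + A_{n−1} + ⋯ + A_{n−1}⋯A₁, each Aᵢ ∈ {A_L, A_R} with A_L, A_R agreeing in their last N−1 columns), let ϱ_Sᵀ = e₁ᵀ·adj(I−M) and ϱᵀ = e₁ᵀ·adj(I−A₀). Then ϱ_Sᵀ·P = det(P)·ϱᵀ. -/

import Mathlib

open Matrix

/-- `M_S = A_{S_{n−1}} ⋯ A_{S_1} A_{S_0}`. -/
def wordProd {N n : ℕ} (A : Bool → Matrix (Fin N) (Fin N) ℝ)
    (S : Fin n → Bool) : Matrix (Fin N) (Fin N) ℝ :=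
  ((List.ofFn fun i => A (S i)).reverse).prod

/-- `P_S = I + A_{S_{n−1}} + A_{S_{n−1}}A_{S_{n−2}} + ⋯ + A_{S_{n−1}}⋯A_{S_1}`. -/
def wordP {N n : ℕ} (A : Bool → Matrix (Fin N) (Fin N) ℝ)
    (S : Fin n → Bool) : Matrix (Fin N) (Fin N) ℝ :=
  ∑ k ∈ Finset.range n, (((List.ofFn fun i => A (S i)).reverse).take k).prod

/-- Row 0 of the adjugate depends only on the columns other than column 0. -/
lemma adj_row_zero_eq {N : ℕ} [NeZero N] (X Y : Matrix (Fin N) (Fin N) ℝ)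
    (h : ∀ j : Fin N, j ≠ 0 → ∀ i, X i j = Y i j) :
    Matrix.adjugate X 0 = Matrix.adjugate Y 0 := by
  funext j
  rw [Matrix.adjugate_apply, Matrix.adjugate_apply]
  have h1 : X.updateRow j (Pi.single 0 1)
      = ((Y.updateRow j (Pi.single 0 1)).updateCol 0
          fun k => X.updateRow j (Pi.single 0 1) k 0) := by
    funext a b
    by_cases hb : b = 0
    · subst hb; simp [Matrix.updateCol_apply]
    · simp [Matrix.updateCol_apply, hb, Matrix.updateRow_apply, h b hb a]
  rw [h1]
  set W := Y.updateRow j (Pi.single 0 1) with hW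
  have hsplit : (fun k => X.updateRow j (Pi.single 0 1) k 0)
      = (fun k => W k 0) + fun k => X.updateRow j (Pi.single 0 1) k 0 - W k 0 := by
    funext k; simp
  rw [hsplit, Matrix.det_updateCol_add, Matrix.updateCol_eq_self]
  have hz : (W.updateCol 0 fun k => X.updateRow j (Pi.single 0 1) k 0 - W k 0).det = 0 := by
    apply Matrix.det_eq_zero_of_row_eq_zero j
    intro b
    by_cases hb : b = 0
    · subst hb; simp [Matrix.updateCol_apply, hW, Matrix.updateRow_apply]
    · simp [Matrix.updateCol_apply, hb, hW, Matrix.updateRow_apply,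
        Pi.single_eq_of_ne hb]
  rw [hz, add_zero]

/-- With `ϱ_Sᵀ = e₁ᵀ·adj(I−M_S)` and `ϱᵀ = e₁ᵀ·adj(I−A_{S_0})`,
one has `ϱ_Sᵀ·P_S = det(P_S)·ϱᵀ`. -/
theorem rhoS_vecMul_wordP {N n : ℕ} [NeZero N] [NeZero n]
    (AL AR : Matrix (Fin N) (Fin N) ℝ)
    (hcol : ∀ j : Fin N, j ≠ 0 → ∀ i : Fin N, AL i j = AR i j)
    (S : Fin n → Bool) (A : Bool → Matrix (Fin N) (Fin N) ℝ)
    (hA : A = fun s => if s then AL else AR) :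
    Matrix.vecMul ((Matrix.adjugate (1 - wordProd A S)) 0) (wordP A S)
      = (wordP A S).det • (Matrix.adjugate (1 - A (S 0))) 0 := by
  have hcol' : ∀ (s t : Bool) (j : Fin N), j ≠ 0 → ∀ i, A s i j = A t i j := by
    intro s t j hj i
    cases s <;> cases t <;> simp [hA, hcol j hj i]
  set L := (List.ofFn fun i => A (S i)).reverse with hL
  have hlen : L.length = n := by simp [hL]
  have hmem : ∀ X ∈ L, ∃ s : Bool, X = A s := by
    intro X hX
    rw [hL, List.mem_reverse, List.mem_ofFn] at hX
    obtain ⟨i, hi⟩ := hX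
    exact ⟨S i, hi.symm⟩
  have key : ∀ (j : Fin N), j ≠ 0 → ∀ i,
      (wordP A S * (1 - A (S 0))) i j = (1 - wordProd A S) i j := by
    intro j hj i
    have hstep : ∀ k, k < n → ((L.take k).prod * A (S 0)) i j = (L.take (k+1)).prod i j := by
      intro k hk
      have hk' : k < L.length := hlen ▸ hk
      rw [List.prod_take_succ _ _ hk']
      obtain ⟨s, hs⟩ := hmem (L[k]'hk') (List.getElem_mem hk')
      rw [hs, Matrix.mul_apply, Matrix.mul_apply]
      exact Finset.sum_congr rfl fun m _ => by rw [hcol' (S 0) s j hj m]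
    have hexp : (wordP A S * (1 - A (S 0))) i j
        = ∑ k ∈ Finset.range n, ((L.take k).prod i j - (L.take (k+1)).prod i j) := by
      rw [wordP, Finset.sum_mul, Matrix.sum_apply]
      apply Finset.sum_congr rfl
      intro k hk
      rw [Matrix.mul_sub, Matrix.mul_one, Matrix.sub_apply,
        hstep k (Finset.mem_range.mp hk)]
    rw [hexp, Finset.sum_range_sub' (fun k => (L.take k).prod i j)]
    have htake : L.take n = L := by rw [← hlen]; exact List.take_length
    simp [wordProd, ← hL, htake, Matrix.sub_apply]
  have hadj : Matrix.adjugate (1 - wordProd A S) 0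
      = Matrix.adjugate (wordP A S * (1 - A (S 0))) 0 :=
    adj_row_zero_eq _ _ (fun j hj i => (key j hj i).symm)
  rw [hadj, Matrix.adjugate_mul_distrib]
  have hrow : ((Matrix.adjugate (1 - A (S 0)) * Matrix.adjugate (wordP A S) :
        Matrix (Fin N) (Fin N) ℝ)) 0
      = Matrix.vecMul (Matrix.adjugate (1 - A (S 0)) 0) (Matrix.adjugate (wordP A S)) := by
    funext b
    simp [Matrix.mul_apply, Matrix.vecMul, dotProduct]
  rw [hrow, Matrix.vecMul_vecMul, Matrix.adjugate_mul]
  funext b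
  simp [Matrix.vecMul, dotProduct, Matrix.smul_apply, Matrix.one_apply, mul_comm]
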